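/- If a sequence of real-rooted univariate real polynomials converges coefficientwise to a polynomial P, then P is real-rooted (or constant). -/

import Mathlib

open Polynomial Filter Finset

noncomputable def myE (A : Polynomial ℝ) : Polynomial ℝ := A * A.comp (-Polynomial.X)

noncomputable def myT (A : Polynomial ℝ) : Polynomial ℝ :=
  ∑ k ∈ Finset.range (A.natDegree + 1),
    Polynomial.C ((-1 : ℝ) ^ k * (myE A).coeff (2 * k)) * Polynomial.X ^ k

lemma coeff_comp_neg_X (A : Polynomial ℝ) (j : ℕ) :
    (A.comp (-X)).coeff j = (-1) ^ j * A.coeff j := by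
  induction A using Polynomial.induction_on' with
  | add p q hp hq => simp [add_comp, coeff_add, hp, hq, mul_add]
  | monomial n a =>
    have hC : ((-1 : Polynomial ℝ)) ^ n = C ((-1 : ℝ) ^ n) := by
      rw [map_pow, map_neg, map_one]
    rw [← C_mul_X_pow_eq_monomial, mul_comp, C_comp, pow_comp, X_comp, neg_pow, hC,
      show C a * (C ((-1 : ℝ) ^ n) * X ^ n) = C (a * (-1) ^ n) * X ^ n by rw [← mul_assoc, ← C_mul]]
    by_cases h : j = n
    · subst h
      simp only [coeff_C_mul, coeff_X_pow, if_pos rfl]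
      ring
    · simp only [coeff_C_mul, coeff_X_pow, if_neg h, mul_zero]

lemma natDegree_myE_le (A : Polynomial ℝ) : (myE A).natDegree ≤ 2 * A.natDegree := by
  unfold myE
  refine le_trans (natDegree_mul_le) ?_
  have h1 : (A.comp (-X)).natDegree ≤ A.natDegree * (-X : Polynomial ℝ).natDegree :=
    natDegree_comp_le
  have h2 : (-X : Polynomial ℝ).natDegree = 1 := by simp
  rw [h2, mul_one] at h1
  omega

lemma myE_coeff (A : Polynomial ℝ) (n : ℕ) :
    (myE A).coeff n = ∑ p ∈ Finset.HasAntidiagonal.antidiagonal n,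
      A.coeff p.1 * ((-1) ^ p.2 * A.coeff p.2) := by
  unfold myE
  rw [coeff_mul]
  exact Finset.sum_congr rfl fun p _ => by rw [coeff_comp_neg_X]

lemma myE_coeff_odd (A : Polynomial ℝ) (n : ℕ) (hn : Odd n) : (myE A).coeff n = 0 := by
  have h := myE_coeff A n
  have hswap : ∑ p ∈ Finset.HasAntidiagonal.antidiagonal n, A.coeff p.1 * ((-1) ^ p.2 * A.coeff p.2)
      = ∑ p ∈ Finset.HasAntidiagonal.antidiagonal n, A.coeff p.2 * ((-1) ^ p.1 * A.coeff p.1) := by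
    nth_rewrite 1 [← Finset.HasAntidiagonal.map_swap_antidiagonal (n := n)]
    rw [Finset.sum_map]
    simp only [Function.Embedding.coeFn_mk, Prod.fst_swap, Prod.snd_swap]
  have hkey : (myE A).coeff n + (myE A).coeff n = 0 := by
    nth_rewrite 1 [h]
    rw [hswap, h, ← Finset.sum_add_distrib]
    refine Finset.sum_eq_zero fun p hp => ?_
    have hpn : p.1 + p.2 = n := Finset.HasAntidiagonal.mem_antidiagonal.mp hp
    have h1 : ((-1 : ℝ)) ^ p.1 * ((-1 : ℝ)) ^ p.2 = -1 := by
      rw [← pow_add, hpn]; exact hn.neg_one_pow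
    have hss : ((-1 : ℝ)) ^ p.1 * ((-1 : ℝ)) ^ p.1 = 1 := by
      rw [← pow_add]; exact Even.neg_one_pow ⟨p.1, rfl⟩
    have ht : ((-1 : ℝ)) ^ p.2 = -((-1 : ℝ)) ^ p.1 := by
      calc ((-1 : ℝ)) ^ p.2 = ((-1 : ℝ)) ^ p.1 * ((-1 : ℝ)) ^ p.1 * ((-1 : ℝ)) ^ p.2 := by
            rw [hss, one_mul]
        _ = ((-1 : ℝ)) ^ p.1 * (((-1 : ℝ)) ^ p.1 * ((-1 : ℝ)) ^ p.2) := by ring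
        _ = -((-1 : ℝ)) ^ p.1 := by rw [h1]; ring
    rw [ht]; ring
  linarith

lemma myT_coeff (A : Polynomial ℝ) (k : ℕ) :
    (myT A).coeff k = (-1) ^ k * (myE A).coeff (2 * k) := by
  unfold myT
  rw [finset_sum_coeff]
  simp only [coeff_C_mul, coeff_X_pow, mul_ite, mul_one, mul_zero]
  rw [Finset.sum_ite_eq (Finset.range (A.natDegree + 1)) k
      (fun k' => (-1 : ℝ) ^ k' * (myE A).coeff (2 * k'))]
  by_cases hk : k ∈ Finset.range (A.natDegree + 1)
  · rw [if_pos hk]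
  · rw [if_neg hk]
    have hk' : A.natDegree < k := by simpa using hk
    have : (myE A).coeff (2 * k) = 0 := by
      apply coeff_eq_zero_of_natDegree_lt
      have := natDegree_myE_le A
      omega
    rw [this, mul_zero]
lemma sum_range_two_mul {M : Type*} [AddCommMonoid M] (n : ℕ) (f : ℕ → M) :
    ∑ i ∈ Finset.range (2 * n), f i = ∑ k ∈ Finset.range n, (f (2 * k) + f (2 * k + 1)) := by
  induction n with
  | zero => simp
  | succ n ih =>
    rw [Finset.sum_range_succ, ← ih, show 2 * (n + 1) = 2 * n + 1 + 1 by ring,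
      Finset.sum_range_succ, Finset.sum_range_succ, add_assoc]

lemma aeval_myT (A : Polynomial ℝ) (z : ℂ) :
    Polynomial.aeval (-(z ^ 2)) (myT A) = Polynomial.aeval z A * Polynomial.aeval (-z) A := by
  have hE : Polynomial.aeval z (myE A) = Polynomial.aeval z A * Polynomial.aeval (-z) A := by
    unfold myE
    rw [map_mul, aeval_comp]
    simp
  rw [← hE]
  unfold myT
  rw [map_sum]
  have hA : (myE A).natDegree < 2 * (A.natDegree + 1) := by
    have := natDegree_myE_le A; omega
  rw [Polynomial.aeval_eq_sum_range' hA z, sum_range_two_mul]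
  refine Finset.sum_congr rfl fun k hk => ?_
  rw [map_mul, map_pow, aeval_C, aeval_X, Complex.coe_algebraMap]
  have hodd : (myE A).coeff (2 * k + 1) = 0 := myE_coeff_odd A _ ⟨k, by ring⟩
  rw [hodd]
  simp only [zero_smul, add_zero]
  rw [Complex.real_smul]
  have h1 : ((-1 : ℝ)) ^ k * ((-1 : ℝ)) ^ k = 1 := by
    rw [← pow_add]; exact Even.neg_one_pow ⟨k, rfl⟩
  have h2 : (-(z ^ 2) : ℂ) ^ k = (((-1 : ℝ) ^ k : ℝ) : ℂ) * z ^ (2 * k) := by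
    push_cast
    rw [neg_pow, ← pow_mul]
  rw [h2, ← mul_assoc, ← Complex.ofReal_mul]
  congr 1
  exact_mod_cast (by linear_combination ((myE A).coeff (2 * k)) * h1 :
    ((-1 : ℝ) ^ k * (myE A).coeff (2 * k)) * (-1 : ℝ) ^ k = (myE A).coeff (2 * k))

lemma myE_mul (p q : Polynomial ℝ) : myE (p * q) = myE p * myE q := by
  unfold myE; rw [mul_comp]; ring

lemma myE_X_sub_C (r : ℝ) : myE (X - C r) = C (r ^ 2) - X ^ 2 := by
  unfold myE
  rw [sub_comp, X_comp, C_comp]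
  have h : (C (r ^ 2) : Polynomial ℝ) = C r ^ 2 := by rw [map_pow]
  rw [h]; ring

lemma myT_mul_X_sub_C (p : Polynomial ℝ) (r : ℝ) :
    myT (p * (X - C r)) = myT p * (X + C (r ^ 2)) := by
  ext k
  rw [myT_coeff, myE_mul, myE_X_sub_C]
  have hrhs : (myT p * (X + C (r ^ 2))).coeff k
      = (myT p * X).coeff k + (myT p).coeff k * r ^ 2 := by
    rw [mul_add, coeff_add, coeff_mul_C]
  rw [hrhs]
  have hmul : (myE p * (C (r ^ 2) - X ^ 2)).coeff (2 * k)
      = (myE p).coeff (2 * k) * r ^ 2 - (myE p * X ^ 2).coeff (2 * k) := by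
    rw [mul_sub, coeff_sub, coeff_mul_C]
  rw [hmul, coeff_mul_X_pow']
  cases k with
  | zero =>
    rw [if_neg (by omega), coeff_mul_X_zero, myT_coeff]
    norm_num
  | succ k =>
    rw [if_pos (by omega : 2 ≤ 2 * (k + 1))]
    have h2 : 2 * (k + 1) - 2 = 2 * k := by omega
    rw [h2, show k + 1 = k + 1 from rfl, coeff_mul_X, myT_coeff, myT_coeff, pow_succ]
    ring

lemma myT_C (a : ℝ) : myT (C a) = C (a ^ 2) := by
  ext k
  rw [myT_coeff]
  have hE : myE (C a) = C (a ^ 2) := by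
    unfold myE; rw [C_comp, ← C_mul, sq]
  rw [hE]
  cases k with
  | zero => simp
  | succ k =>
    rw [Polynomial.coeff_C, Polynomial.coeff_C, if_neg (by omega : ¬(2 * (k + 1) = 0)),
      if_neg (by omega : ¬(k + 1 = 0)), mul_zero]

lemma myT_prod (ms : Multiset ℝ) (a : ℝ) :
    myT (C a * (ms.map fun r => X - C r).prod)
      = C (a ^ 2) * (ms.map fun r => X + C (r ^ 2)).prod := by
  induction ms using Multiset.induction with
  | empty => simp [myT_C]
  | cons r ms ih =>
    rw [Multiset.map_cons, Multiset.prod_cons, Multiset.map_cons, Multiset.prod_cons,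
      show C a * ((X - C r) * (Multiset.map (fun r => X - C r) ms).prod)
        = (C a * (Multiset.map (fun r => X - C r) ms).prod) * (X - C r) by ring,
      myT_mul_X_sub_C, ih]
    ring

lemma exists_factorization (p : Polynomial ℝ) (hp : p ≠ 0)
    (hr : ∀ z : ℂ, Polynomial.aeval z p = 0 → z.im = 0) :
    ∃ (a : ℝ) (ms : Multiset ℝ), p = C a * (ms.map fun r => X - C r).prod := by
  suffices H : ∀ (n : ℕ) (p : Polynomial ℝ), p.natDegree = n → p ≠ 0 →
      (∀ z : ℂ, Polynomial.aeval z p = 0 → z.im = 0) →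
      ∃ (a : ℝ) (ms : Multiset ℝ), p = C a * (ms.map fun r => X - C r).prod by
    exact H _ p rfl hp hr
  intro n
  induction n using Nat.strong_induction_on with
  | _ n ih =>
    intro p hn hp hr
    rcases eq_or_ne n 0 with h0 | h0
    · refine ⟨p.coeff 0, 0, ?_⟩
      simp [← Polynomial.eq_C_of_natDegree_eq_zero (hn.trans h0)]
    · have hdeg : (p.map (algebraMap ℝ ℂ)).degree ≠ 0 := by
        rw [Polynomial.degree_map, Polynomial.degree_eq_natDegree hp, hn]
        exact_mod_cast h0
      obtain ⟨z, hz⟩ := IsAlgClosed.exists_root _ hdeg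
      have hz0 : Polynomial.aeval z p = 0 := by
        rwa [Polynomial.aeval_def, ← Polynomial.eval_map]
      have him : z.im = 0 := hr z hz0
      have hzr : z = ((z.re : ℝ) : ℂ) := Complex.ext rfl (by simp [him])
      have hroot : p.IsRoot z.re := by
        have h1 : Polynomial.aeval ((z.re : ℝ) : ℂ) p = 0 := by rw [← hzr]; exact hz0
        have h2 : algebraMap ℝ ℂ (p.eval z.re) = 0 := by
          rw [← Polynomial.aeval_algebraMap_apply_eq_algebraMap_eval]
          exact h1
        have h3 : ((p.eval z.re : ℝ) : ℂ) = 0 := h2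
        exact_mod_cast h3
      obtain ⟨q, hq⟩ := Polynomial.dvd_iff_isRoot.mpr hroot
      have hq0 : q ≠ 0 := by rintro rfl; rw [mul_zero] at hq; exact hp hq
      have hXr : (X - C z.re : Polynomial ℝ) ≠ 0 := Polynomial.X_sub_C_ne_zero z.re
      have hdq : q.natDegree < n := by
        have hmul := Polynomial.natDegree_mul hXr hq0
        rw [← hq, Polynomial.natDegree_X_sub_C] at hmul
        omega
      have hq' : ∀ w : ℂ, Polynomial.aeval w q = 0 → w.im = 0 := by
        intro w hw
        apply hr w
        rw [hq, map_mul, hw, mul_zero]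
      obtain ⟨a, ms, hfac⟩ := ih q.natDegree hdq q rfl hq0 hq'
      refine ⟨a, z.re ::ₘ ms, ?_⟩
      rw [Multiset.map_cons, Multiset.prod_cons, hq, hfac]
      ring
def GoodSeq (b : ℕ → ℝ) : Prop :=
  (∀ k, 0 ≤ b k) ∧ ∀ i j : ℕ, i + 1 ≤ j → b i * b (j + 1) ≤ b (i + 1) * b j

lemma goodSeq_C (a : ℝ) (ha : 0 ≤ a) : GoodSeq (Polynomial.C a).coeff := by
  constructor
  · intro k
    rw [coeff_C]
    split <;> simp [ha]
  · intro i j hij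
    have h1 : (Polynomial.C a).coeff (j + 1) = 0 := by rw [coeff_C, if_neg (by omega)]
    have h2 : (Polynomial.C a).coeff (i + 1) = 0 := by rw [coeff_C, if_neg (by omega)]
    rw [h1, h2, mul_zero, zero_mul]

lemma goodSeq_mul (p : Polynomial ℝ) (hp : GoodSeq p.coeff) (s : ℝ) (hs : 0 ≤ s) :
    GoodSeq (p * (X + C s)).coeff := by
  obtain ⟨hnn, hslc⟩ := hp
  have hc0 : (p * (X + C s)).coeff 0 = p.coeff 0 * s := by
    rw [mul_add, coeff_add, coeff_mul_X_zero, coeff_mul_C, zero_add]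
  have hcS : ∀ k, (p * (X + C s)).coeff (k + 1) = p.coeff k + p.coeff (k + 1) * s := by
    intro k
    rw [mul_add, coeff_add, coeff_mul_X, coeff_mul_C]
  constructor
  · intro k
    cases k with
    | zero => rw [hc0]; exact mul_nonneg (hnn 0) hs
    | succ k => rw [hcS]; exact add_nonneg (hnn k) (mul_nonneg (hnn (k + 1)) hs)
  · intro i j hij
    obtain ⟨J, rfl⟩ : ∃ J, j = J + 1 := ⟨j - 1, by omega⟩
    cases i with
    | zero =>
      rw [hc0, hcS, hcS, hcS]
      have hA : p.coeff 0 * p.coeff (J + 1 + 1) ≤ p.coeff 1 * p.coeff (J + 1) :=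
        hslc 0 (J + 1) (by omega)
      nlinarith [mul_le_mul_of_nonneg_left hA (mul_nonneg hs hs),
        mul_nonneg (hnn 0) (hnn J), mul_nonneg (mul_nonneg hs (hnn 1)) (hnn J),
        mul_nonneg (mul_nonneg hs (hnn 0)) (hnn (J + 1))]
    | succ I =>
      rw [hcS, hcS, hcS, hcS]
      have hA1 : p.coeff I * p.coeff (J + 1) ≤ p.coeff (I + 1) * p.coeff J :=
        hslc I J (by omega)
      have hA2 : p.coeff (I + 1) * p.coeff (J + 1 + 1) ≤ p.coeff (I + 1 + 1) * p.coeff (J + 1) :=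
        hslc (I + 1) (J + 1) (by omega)
      have hA3 : p.coeff I * p.coeff (J + 1 + 1) ≤ p.coeff (I + 1 + 1) * p.coeff J := by
        rcases Nat.lt_or_ge (I + 2) (J + 1) with hlt | hge
        · calc p.coeff I * p.coeff (J + 1 + 1) ≤ p.coeff (I + 1) * p.coeff (J + 1) :=
              hslc I (J + 1) (by omega)
            _ ≤ p.coeff (I + 1 + 1) * p.coeff J := hslc (I + 1) J (by omega)
        · have hJ : J = I + 1 := by omega
          subst hJ
          calc p.coeff I * p.coeff (I + 1 + 1 + 1) ≤ p.coeff (I + 1) * p.coeff (I + 1 + 1) :=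
              hslc I (I + 2) (by omega)
            _ = p.coeff (I + 1 + 1) * p.coeff (I + 1) := by ring
      nlinarith [mul_le_mul_of_nonneg_left hA3 hs,
        mul_le_mul_of_nonneg_left hA2 (mul_nonneg hs hs)]

lemma goodSeq_prod (a : ℝ) (ha : 0 ≤ a) (ms : Multiset ℝ) (hms : ∀ s ∈ ms, 0 ≤ s) :
    GoodSeq ((Polynomial.C a) * (ms.map fun s => X + C s).prod).coeff := by
  induction ms using Multiset.induction with
  | empty => simpa using goodSeq_C a ha
  | cons s ms ih =>
    have h1 : (Polynomial.C a) * ((s ::ₘ ms).map fun s => X + C s).prod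
        = ((Polynomial.C a) * (ms.map fun s => X + C s).prod) * (X + C s) := by
      rw [Multiset.map_cons, Multiset.prod_cons]; ring
    rw [h1]
    exact goodSeq_mul _ (ih fun t ht => hms t (Multiset.mem_cons_of_mem ht))
      s (hms s (Multiset.mem_cons_self s ms))

lemma abs_aeval_mono (a : ℝ) (ms : Multiset ℝ) (z w : ℂ)
    (hre : w.re = z.re) (him : |w.im| ≤ |z.im|) :
    ‖Polynomial.aeval w ((Polynomial.C a) * (ms.map fun s => X + C s).prod)‖
      ≤ ‖Polynomial.aeval z ((Polynomial.C a) * (ms.map fun s => X + C s).prod)‖ := by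
  induction ms using Multiset.induction with
  | empty => simp
  | cons s ms ih =>
    have h1 : (Polynomial.C a) * ((s ::ₘ ms).map fun s => X + C s).prod
        = ((Polynomial.C a) * (ms.map fun s => X + C s).prod) * (X + C s) := by
      rw [Multiset.map_cons, Multiset.prod_cons]; ring
    have hfac : ‖Polynomial.aeval w (X + C s)‖ ≤ ‖Polynomial.aeval z (X + C s)‖ := by
      have hw : Polynomial.aeval w (X + C s) = w + (s : ℂ) := by
        simp [Complex.coe_algebraMap]
      have hz : Polynomial.aeval z (X + C s) = z + (s : ℂ) := by
        simp [Complex.coe_algebraMap]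
      rw [hw, hz]
      have h3 : w.im * w.im ≤ z.im * z.im := by
        rw [← abs_mul_abs_self w.im, ← abs_mul_abs_self z.im]
        exact mul_self_le_mul_self (abs_nonneg _) him
      have h2 : Complex.normSq (w + (s : ℂ)) ≤ Complex.normSq (z + (s : ℂ)) := by
        rw [Complex.normSq_apply, Complex.normSq_apply]
        simp only [Complex.add_re, Complex.add_im, Complex.ofReal_re, Complex.ofReal_im,
          add_zero, hre]
        linarith
      rw [Complex.norm_def, Complex.norm_def]
      exact Real.sqrt_le_sqrt h2
    have hW : Polynomial.aeval w ((Polynomial.C a) * ((s ::ₘ ms).map fun s => X + C s).prod)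
        = Polynomial.aeval w ((Polynomial.C a) * (ms.map fun s => X + C s).prod)
          * Polynomial.aeval w (X + C s) := by rw [h1, map_mul]
    have hZ : Polynomial.aeval z ((Polynomial.C a) * ((s ::ₘ ms).map fun s => X + C s).prod)
        = Polynomial.aeval z ((Polynomial.C a) * (ms.map fun s => X + C s).prod)
          * Polynomial.aeval z (X + C s) := by rw [h1, map_mul]
    rw [hW, hZ, norm_mul, norm_mul]
    exact mul_le_mul ih hfac (norm_nonneg _) (norm_nonneg _)
lemma conv_aeval (D : ℕ → Polynomial ℝ) (L : Polynomial ℝ)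
    (hgood : ∀ m, GoodSeq (D m).coeff)
    (hlim : ∀ k, Filter.Tendsto (fun m => (D m).coeff k) Filter.atTop (nhds (L.coeff k)))
    (hpos : 0 < L.coeff L.natDegree) (z : ℂ) :
    Filter.Tendsto (fun m => Polynomial.aeval z (D m)) Filter.atTop
      (nhds (Polynomial.aeval z L)) := by
  set N := L.natDegree with hN
  set R : ℝ := ‖z‖ + 1 with hRdef
  have hR0 : 0 < R := by positivity
  have hzR : ‖z‖ ≤ R := by simp [hRdef]
  have hR1 : 1 ≤ R := by
    rw [hRdef]; linarith [norm_nonneg z]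
  have hcN1 : L.coeff (N + 1) = 0 := coeff_eq_zero_of_natDegree_lt (by omega)
  have hev1 : ∀ᶠ m in Filter.atTop, L.coeff N / 2 ≤ (D m).coeff N :=
    (hlim N).eventually (eventually_ge_nhds (by linarith))
  have hev2 : ∀ᶠ m in Filter.atTop, (D m).coeff (N + 1) * (2 * R) ≤ L.coeff N / 2 := by
    have h := hlim (N + 1)
    rw [hcN1] at h
    have h2 : ∀ᶠ x in nhds (0 : ℝ), x ≤ L.coeff N / (2 * (2 * R)) :=
      eventually_le_nhds (by positivity)
    filter_upwards [h.eventually h2] with m hm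
    rw [← le_div_iff₀ (by positivity)]
    calc (D m).coeff (N + 1) ≤ L.coeff N / (2 * (2 * R)) := hm
      _ = L.coeff N / 2 / (2 * R) := by rw [div_div]
  rw [tendsto_iff_norm_sub_tendsto_zero]
  apply squeeze_zero' (Filter.Eventually.of_forall fun m => norm_nonneg _)
    (g := fun m => ‖∑ i ∈ Finset.range (N + 1),
        (((D m).coeff i : ℂ) - ((L.coeff i : ℝ) : ℂ)) * z ^ i‖
      + 2 * R ^ (N + 1) * (D m).coeff (N + 1))
  · -- eventual bound
    filter_upwards [hev1, hev2] with m h1 h2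
    have hbnn := (hgood m).1
    have hslc := (hgood m).2
    have hbN : 0 < (D m).coeff N := lt_of_lt_of_le (by linarith) h1
    have h7 : (D m).coeff (N + 1) * (2 * R) ≤ (D m).coeff N := le_trans h2 h1
    -- ratio decay
    have hratio : ∀ k, N + 1 ≤ k → (D m).coeff (k + 1) * (2 * R) ≤ (D m).coeff k := by
      intro k hk
      have hs := hslc N k hk
      have h8 := mul_le_mul_of_nonneg_right hs (by positivity : (0:ℝ) ≤ 2 * R)
      have h9 := mul_le_mul_of_nonneg_right h7 (hbnn k)
      have h10 : (D m).coeff N * ((D m).coeff (k + 1) * (2 * R))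
          ≤ (D m).coeff N * (D m).coeff k := by nlinarith
      exact le_of_mul_le_mul_left h10 hbN
    have hgeo : ∀ j, (D m).coeff (N + 1 + j) * (2 * R) ^ j ≤ (D m).coeff (N + 1) := by
      intro j
      induction j with
      | zero => simp
      | succ j ihj =>
        have hstep := mul_le_mul_of_nonneg_right (hratio (N + 1 + j) (by omega))
          (by positivity : (0:ℝ) ≤ (2 * R) ^ j)
        calc (D m).coeff (N + 1 + (j + 1)) * (2 * R) ^ (j + 1)
            = (D m).coeff (N + 1 + j + 1) * (2 * R) * (2 * R) ^ j := by
              rw [pow_succ, ← add_assoc]; ring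
          _ ≤ (D m).coeff (N + 1 + j) * (2 * R) ^ j := hstep
          _ ≤ (D m).coeff (N + 1) := ihj
    have hterm' : ∀ j, (D m).coeff (N + 1 + j) * R ^ (N + 1 + j)
        ≤ (D m).coeff (N + 1) * R ^ (N + 1) * (1 / 2) ^ j := by
      intro j
      have hh := mul_le_mul_of_nonneg_right (hgeo j) (by positivity : (0:ℝ) ≤ R ^ (N + 1))
      have hpow : ((2 * R) * (1 / 2) : ℝ) = R := by ring
      have hcomb : (2 * R) ^ j * (1 / 2 : ℝ) ^ j = R ^ j := by rw [← mul_pow, hpow]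
      calc (D m).coeff (N + 1 + j) * R ^ (N + 1 + j)
          = (D m).coeff (N + 1 + j) * (2 * R) ^ j * R ^ (N + 1) * (1 / 2) ^ j := by
            rw [pow_add, ← hcomb]; ring
        _ ≤ (D m).coeff (N + 1) * R ^ (N + 1) * (1 / 2) ^ j := by
            apply mul_le_mul_of_nonneg_right hh (by positivity)
    -- decompose the evaluation
    set M := max ((D m).natDegree + 1) (N + 1) with hM
    have hM1 : (D m).natDegree < M := lt_of_lt_of_le (Nat.lt_succ_self _) (le_max_left _ _)
    have hM2 : N + 1 ≤ M := le_max_right _ _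
    have hDm : Polynomial.aeval z (D m) = ∑ i ∈ Finset.range M, ((D m).coeff i : ℂ) * z ^ i := by
      rw [Polynomial.aeval_eq_sum_range' hM1 z]
      exact Finset.sum_congr rfl fun i _ => Complex.real_smul
    have hL : Polynomial.aeval z L = ∑ i ∈ Finset.range (N + 1), ((L.coeff i : ℝ) : ℂ) * z ^ i := by
      rw [Polynomial.aeval_eq_sum_range' (by omega : L.natDegree < N + 1) z]
      exact Finset.sum_congr rfl fun i _ => Complex.real_smul
    have hsplit : ∑ i ∈ Finset.range M, ((D m).coeff i : ℂ) * z ^ i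
        = (∑ i ∈ Finset.range (N + 1), ((D m).coeff i : ℂ) * z ^ i)
          + ∑ i ∈ Finset.Ico (N + 1) M, ((D m).coeff i : ℂ) * z ^ i :=
      (Finset.sum_range_add_sum_Ico _ hM2).symm
    have hdiff : Polynomial.aeval z (D m) - Polynomial.aeval z L
        = (∑ i ∈ Finset.range (N + 1), (((D m).coeff i : ℂ) - ((L.coeff i : ℝ) : ℂ)) * z ^ i)
          + ∑ i ∈ Finset.Ico (N + 1) M, ((D m).coeff i : ℂ) * z ^ i := by
      rw [hDm, hsplit, hL]
      have hss : ∑ i ∈ Finset.range (N + 1), (((D m).coeff i : ℂ) - ((L.coeff i : ℝ) : ℂ)) * z ^ i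
          = (∑ i ∈ Finset.range (N + 1), ((D m).coeff i : ℂ) * z ^ i)
            - ∑ i ∈ Finset.range (N + 1), ((L.coeff i : ℝ) : ℂ) * z ^ i := by
        rw [← Finset.sum_sub_distrib]
        exact Finset.sum_congr rfl fun i _ => by ring
      rw [hss]
      ring
    have hIco : ‖∑ i ∈ Finset.Ico (N + 1) M, ((D m).coeff i : ℂ) * z ^ i‖
        ≤ 2 * R ^ (N + 1) * (D m).coeff (N + 1) := by
      calc ‖∑ i ∈ Finset.Ico (N + 1) M, ((D m).coeff i : ℂ) * z ^ i‖
          ≤ ∑ i ∈ Finset.Ico (N + 1) M, ‖((D m).coeff i : ℂ) * z ^ i‖ := norm_sum_le _ _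
        _ ≤ ∑ i ∈ Finset.Ico (N + 1) M, (D m).coeff i * R ^ i := by
            apply Finset.sum_le_sum
            intro i hi
            rw [norm_mul, norm_pow, Complex.norm_real]
            rw [Real.norm_eq_abs, abs_of_nonneg (hbnn i)]
            exact mul_le_mul_of_nonneg_left (pow_le_pow_left₀ (norm_nonneg z) hzR i) (hbnn i)
        _ = ∑ j ∈ Finset.range (M - (N + 1)), (D m).coeff (N + 1 + j) * R ^ (N + 1 + j) := by
            rw [Finset.sum_Ico_eq_sum_range]
        _ ≤ ∑ j ∈ Finset.range (M - (N + 1)), (D m).coeff (N + 1) * R ^ (N + 1) * (1 / 2) ^ j :=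
            Finset.sum_le_sum fun j _ => hterm' j
        _ = (D m).coeff (N + 1) * R ^ (N + 1) * ∑ j ∈ Finset.range (M - (N + 1)), (1 / 2 : ℝ) ^ j := by
            rw [Finset.mul_sum]
        _ ≤ (D m).coeff (N + 1) * R ^ (N + 1) * 2 := by
            apply mul_le_mul_of_nonneg_left (sum_geometric_two_le _)
              (mul_nonneg (hbnn _) (by positivity))
        _ = 2 * R ^ (N + 1) * (D m).coeff (N + 1) := by ring
    calc ‖Polynomial.aeval z (D m) - Polynomial.aeval z L‖
        ≤ ‖∑ i ∈ Finset.range (N + 1), (((D m).coeff i : ℂ) - ((L.coeff i : ℝ) : ℂ)) * z ^ i‖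
          + ‖∑ i ∈ Finset.Ico (N + 1) M, ((D m).coeff i : ℂ) * z ^ i‖ := by
          rw [hdiff]; exact norm_add_le _ _
      _ ≤ ‖∑ i ∈ Finset.range (N + 1), (((D m).coeff i : ℂ) - ((L.coeff i : ℝ) : ℂ)) * z ^ i‖
          + 2 * R ^ (N + 1) * (D m).coeff (N + 1) := by linarith
  · -- the bound tends to 0
    have t1 : Filter.Tendsto (fun m => ∑ i ∈ Finset.range (N + 1),
        (((D m).coeff i : ℂ) - ((L.coeff i : ℝ) : ℂ)) * z ^ i) Filter.atTop (nhds 0) := by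
      have : ∀ i ∈ Finset.range (N + 1), Filter.Tendsto
          (fun m => (((D m).coeff i : ℂ) - ((L.coeff i : ℝ) : ℂ)) * z ^ i)
          Filter.atTop (nhds 0) := by
        intro i _
        have hci : Filter.Tendsto (fun m => ((D m).coeff i : ℂ)) Filter.atTop
            (nhds ((L.coeff i : ℝ) : ℂ)) :=
          (Complex.continuous_ofReal.tendsto _).comp (hlim i)
        have h0 : Filter.Tendsto (fun m => (((D m).coeff i : ℂ) - ((L.coeff i : ℝ) : ℂ)))
            Filter.atTop (nhds 0) := by
          have h0' := hci.sub
            (tendsto_const_nhds (x := ((L.coeff i : ℝ) : ℂ)) (f := Filter.atTop))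
          simpa using h0'
        have := h0.mul_const (z ^ i)
        simpa using this
      have := tendsto_finset_sum _ this
      simpa using this
    have t2 : Filter.Tendsto (fun m => 2 * R ^ (N + 1) * (D m).coeff (N + 1))
        Filter.atTop (nhds 0) := by
      have h := hlim (N + 1)
      rw [hcN1] at h
      have := h.const_mul (2 * R ^ (N + 1))
      simpa using this
    have := (t1.norm.add t2)
    simpa using this
/-- A coefficientwise limit of real-rooted real polynomials is
real-rooted or constant. -/
theorem stmt_4 (P : Polynomial ℝ) (Q : ℕ → Polynomial ℝ)
    (hroots : ∀ m, ∀ z : ℂ, Polynomial.aeval z (Q m) = 0 → z.im = 0)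
    (hconv : ∀ k, Filter.Tendsto (fun m => (Q m).coeff k) Filter.atTop
      (nhds (P.coeff k))) :
    P.natDegree = 0 ∨ ∀ z : ℂ, Polynomial.aeval z P = 0 → z.im = 0 := by
  by_contra hcon
  push_neg at hcon
  obtain ⟨hdeg, z₀, hz₀, him0⟩ := hcon
  have hP0 : P ≠ 0 := fun h => hdeg (by simp [h])
  have hQ0 : ∀ m, Q m ≠ 0 := by
    intro m hm
    have := hroots m Complex.I (by simp [hm])
    simpa using this
  have hfac : ∀ m, ∃ (a : ℝ) (ms : Multiset ℝ),
      Q m = C a * (ms.map fun r => X - C r).prod := fun m =>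
    exists_factorization (Q m) (hQ0 m) (hroots m)
  choose A MS hAMS using hfac
  have hTQ : ∀ m, myT (Q m) = C ((A m) ^ 2) * ((MS m).map fun r => X + C (r ^ 2)).prod := by
    intro m; rw [hAMS m]; exact myT_prod _ _
  have hgood : ∀ m, GoodSeq (myT (Q m)).coeff := by
    intro m
    rw [hTQ m]
    have hmm : (MS m).map (fun r => X + C (r ^ 2))
        = ((MS m).map fun r => r ^ 2).map (fun s => X + C s) := by
      rw [Multiset.map_map]; rfl
    rw [hmm]
    exact goodSeq_prod _ (sq_nonneg _) _ (fun s hs => by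
      obtain ⟨r, _, rfl⟩ := Multiset.mem_map.mp hs; exact sq_nonneg r)
  have hTcoeff : ∀ (B : Polynomial ℝ) (k : ℕ), (myT B).coeff k
      = (-1) ^ k * ∑ p ∈ Finset.HasAntidiagonal.antidiagonal (2 * k),
          B.coeff p.1 * ((-1) ^ p.2 * B.coeff p.2) := by
    intro B k; rw [myT_coeff, myE_coeff]
  have hlimT : ∀ k, Filter.Tendsto (fun m => (myT (Q m)).coeff k) Filter.atTop
      (nhds ((myT P).coeff k)) := by
    intro k
    simp only [hTcoeff]
    apply Filter.Tendsto.const_mul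
    apply tendsto_finset_sum
    intro p _
    exact (hconv p.1).mul ((hconv p.2).const_mul _)
  have hTP0 : myT P ≠ 0 := by
    intro hT
    have hall : ∀ z : ℂ, Polynomial.aeval z P * Polynomial.aeval (-z) P = 0 := by
      intro z
      rw [← aeval_myT, hT, map_zero]
    have hPP : (P * P.comp (-X)) = 0 := by
      have hroot : ∀ z : ℂ, ((P * P.comp (-X)).map (algebraMap ℝ ℂ)).IsRoot z := by
        intro z
        have h1 : Polynomial.aeval z (P * P.comp (-X)) = 0 := by
          rw [map_mul]
          have hcomp : Polynomial.aeval z (P.comp (-X)) = Polynomial.aeval (-z) P := by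
            rw [aeval_comp]; simp
          rw [hcomp]
          exact hall z
        rwa [Polynomial.aeval_def, ← Polynomial.eval_map] at h1
      have huniv : {z : ℂ | ((P * P.comp (-X)).map (algebraMap ℝ ℂ)).IsRoot z} = Set.univ :=
        Set.eq_univ_of_forall hroot
      have hmap0 : (P * P.comp (-X)).map (algebraMap ℝ ℂ) = 0 := by
        apply Polynomial.eq_zero_of_infinite_isRoot
        rw [huniv]
        exact Set.infinite_univ
      rwa [Polynomial.map_eq_zero] at hmap0
    rcases mul_eq_zero.mp hPP with h | h
    · exact hP0 h
    · apply hP0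
      have := congrArg (fun q => q.comp (-X : Polynomial ℝ)) h
      simpa [Polynomial.comp_neg_X_comp_neg_X] using this
  have hcnn : ∀ k, 0 ≤ (myT P).coeff k :=
    fun k => ge_of_tendsto (hlimT k) (Filter.Eventually.of_forall fun m => ((hgood m).1 k))
  have hlead : (myT P).coeff (myT P).natDegree ≠ 0 := by
    exact Polynomial.leadingCoeff_ne_zero.mpr hTP0
  have hposN : 0 < (myT P).coeff (myT P).natDegree :=
    lt_of_le_of_ne (hcnn _) (Ne.symm hlead)
  set w₀ := -(z₀ ^ 2) with hw₀
  have hw₀root : Polynomial.aeval w₀ (myT P) = 0 := by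
    rw [hw₀, aeval_myT, hz₀, zero_mul]
  by_cases hre : z₀.re = 0
  · have hw₀eq : w₀ = ((z₀.im ^ 2 : ℝ) : ℂ) := by
      rw [hw₀]
      apply Complex.ext
      · have hsq : (z₀ ^ 2).re = z₀.re * z₀.re - z₀.im * z₀.im := by
          rw [pow_two, Complex.mul_re]
        rw [Complex.neg_re, hsq, hre, Complex.ofReal_re]
        ring
      · have hsq : (z₀ ^ 2).im = z₀.re * z₀.im + z₀.im * z₀.re := by
          rw [pow_two, Complex.mul_im]
        rw [Complex.neg_im, hsq, hre, Complex.ofReal_im]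
        ring
    have heval : (myT P).eval (z₀.im ^ 2) = 0 := by
      have h1 : Polynomial.aeval ((z₀.im ^ 2 : ℝ) : ℂ) (myT P) = 0 := by
        rw [← hw₀eq]; exact hw₀root
      have h2 : algebraMap ℝ ℂ ((myT P).eval (z₀.im ^ 2)) = 0 := by
        rw [← Polynomial.aeval_algebraMap_apply_eq_algebraMap_eval]; exact h1
      rw [Complex.coe_algebraMap] at h2
      exact_mod_cast h2
    have hsum : ∑ i ∈ Finset.range ((myT P).natDegree + 1),
        (myT P).coeff i * (z₀.im ^ 2) ^ i = 0 := by
      rw [← Polynomial.eval_eq_sum_range]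
      exact heval
    have hterm := (Finset.sum_eq_zero_iff_of_nonneg
      (fun i _ => mul_nonneg (hcnn i) (by positivity))).mp hsum
      (myT P).natDegree (Finset.self_mem_range_succ _)
    have hp : (0:ℝ) < (z₀.im ^ 2) ^ (myT P).natDegree := by positivity
    have hzero : (myT P).coeff (myT P).natDegree = 0 := by
      by_contra hne
      have := mul_pos hposN hp
      rw [hterm] at this
      exact lt_irrefl 0 this
    rw [hzero] at hposN
    exact lt_irrefl 0 hposN
  · have hwim : w₀.im ≠ 0 := by
      have h2 : w₀.im = -(2 * z₀.re * z₀.im) := by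
        rw [hw₀, pow_two]
        simp [Complex.mul_im]
        ring
      rw [h2]
      intro hc
      have h1 : z₀.re * z₀.im = 0 := by linarith
      rcases mul_eq_zero.mp h1 with h | h
      · exact hre h
      · exact him0 h
    have hkey : ∀ zz : ℂ, (Polynomial.aeval zz (myT P) = 0)
        ↔ ((myT P).map (algebraMap ℝ ℂ)).IsRoot zz := by
      intro zz
      rw [Polynomial.IsRoot.def, Polynomial.eval_map, Polynomial.aeval_def]
    have hfin : Set.Finite {t : ℝ |
        Polynomial.aeval ((w₀.re : ℂ) + (t : ℂ) * Complex.I) (myT P) = 0} := by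
      have hfin0 : Set.Finite {zz : ℂ | ((myT P).map (algebraMap ℝ ℂ)).IsRoot zz} :=
        Polynomial.finite_setOf_isRoot (by
          rw [Ne, Polynomial.map_eq_zero]; exact hTP0)
      have hsub : {t : ℝ | Polynomial.aeval ((w₀.re : ℂ) + (t : ℂ) * Complex.I) (myT P) = 0}
          = (fun t : ℝ => (w₀.re : ℂ) + (t : ℂ) * Complex.I) ⁻¹'
            {zz : ℂ | ((myT P).map (algebraMap ℝ ℂ)).IsRoot zz} := by
        ext t
        simp only [Set.mem_setOf_eq, Set.mem_preimage, hkey]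
      rw [hsub]
      apply Set.Finite.preimage ?_ hfin0
      intro a _ b _ hab
      have him2 := congrArg Complex.im hab
      simpa using him2
    have hIoc : Set.Infinite (Set.Ioc (0:ℝ) |w₀.im|) := Set.Ioc_infinite (abs_pos.mpr hwim)
    obtain ⟨t, htIoc, htroot⟩ := (hIoc.diff hfin).nonempty
    set z₁ := (w₀.re : ℂ) + (t : ℂ) * Complex.I with hz₁def
    have hz₁ne : Polynomial.aeval z₁ (myT P) ≠ 0 := htroot
    have hz₁re : z₁.re = w₀.re := by simp [hz₁def]
    have hz₁im : |z₁.im| ≤ |w₀.im| := by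
      have h3 : z₁.im = t := by simp [hz₁def]
      rw [h3, abs_of_pos htIoc.1]
      exact htIoc.2
    have habs : ∀ m, ‖Polynomial.aeval z₁ (myT (Q m))‖ ≤ ‖Polynomial.aeval w₀ (myT (Q m))‖ := by
      intro m
      rw [hTQ m]
      have hmm : (MS m).map (fun r => X + C (r ^ 2))
          = ((MS m).map fun r => r ^ 2).map (fun s => X + C s) := by
        rw [Multiset.map_map]; rfl
      rw [hmm]
      exact abs_aeval_mono _ _ w₀ z₁ hz₁re hz₁im
    have hc1 := conv_aeval (fun m => myT (Q m)) (myT P) hgood hlimT hposN w₀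
    have hc2 := conv_aeval (fun m => myT (Q m)) (myT P) hgood hlimT hposN z₁
    have hle : ‖Polynomial.aeval z₁ (myT P)‖ ≤ ‖Polynomial.aeval w₀ (myT P)‖ :=
      le_of_tendsto_of_tendsto' hc2.norm hc1.norm habs
    rw [hw₀root, norm_zero] at hle
    exact hz₁ne (norm_le_zero_iff.mp hle)
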